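/- Let γ : [r,t] → M be a smooth curve on a Riemannian manifold with Levi–Civita connection, and let v(·,τ) be a smooth time-indexed vector field along γ with v(γ(τ),τ) ∈ T_{γ(τ)}M. Define the average velocity u(x_t,r,t) = (1/(t−r)) ∫_r^t P^γ_{τ→t}(v(x_τ,τ)) dτ ∈ T_{x_t}M, where P^γ_{τ→t} is parallel transport along γ. Then u satisfies the Riemannian MeanFlow identity: u(x_t,r,t) = v(x_t,t) − (t−r)·∇_{γ̇(t)}u(x_t,r,t), where ∇_{γ̇(t)} is the covariant derivative along γ at time t (with r fixed). -/

import Mathlib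

open intervalIntegral

/-- Riemannian MeanFlow identity, expressed in the trivialization of the
tangent bundle along the curve `γ` by parallel transport: all tangent spaces
`T_{γ(τ)}M` are identified with a fixed inner product space `E`, parallel
transport along `γ` from time `a` to time `b` is a linear isometry
`P a b : E ≃ₗᵢ E` with `P a a = id` and the cocycle property, `v τ`
represents the instantaneous velocity `v(x_τ, τ) ∈ T_{x_τ}M`, and the average
velocity is `u s = (s − r)⁻¹ • ∫ τ in r..s, P τ s (v τ)`. The covariant
derivative `∇_{γ̇(t)} u` of the vector field `u` along `γ` at time `t` is the
ordinary derivative of its parallel-transported representative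
`s ↦ P s t (u s)` at `s = t`. Then
`u t = v t − (t − r) • ∇_{γ̇(t)} u`. -/
theorem riemannian_meanflow_identity
    {M : Type*} {E : Type*} [NormedAddCommGroup E] [InnerProductSpace ℝ E]
    [CompleteSpace E]
    (γ : ℝ → M)
    (P : ℝ → ℝ → (E ≃ₗᵢ[ℝ] E))
    (hPrefl : ∀ a : ℝ, P a a = LinearIsometryEquiv.refl ℝ E)
    (hPcocycle : ∀ a b c : ℝ, ∀ e : E, P b c (P a b e) = P a c e)
    (v : ℝ → E) (hv : Continuous v)
    (hPv : ∀ t₀ : ℝ, Continuous fun τ => P τ t₀ (v τ))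
    (r t : ℝ) (hrt : r < t)
    (u : ℝ → E)
    (hu : ∀ s : ℝ, u s = (s - r)⁻¹ • ∫ τ in r..s, P τ s (v τ))
    (hdiff : DifferentiableAt ℝ (fun s => P s t (u s)) t) :
    u t = v t - (t - r) • deriv (fun s => P s t (u s)) t := by
  have hc : t - r ≠ 0 := sub_ne_zero.mpr hrt.ne'
  set F : ℝ → E := fun s => ∫ τ in r..s, P τ t (v τ) with hF
  have hrep : (fun s => P s t (u s)) = fun s => (s - r)⁻¹ • F s := by
    funext s
    rw [hu s, LinearIsometryEquiv.map_smul]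
    congr 1
    have h1 : (P s t) (∫ τ in r..s, P τ s (v τ))
        = ∫ τ in r..s, (P s t) ((P τ s) (v τ)) :=
      ((P s t).toLinearIsometry.toContinuousLinearMap.intervalIntegral_comp_comm
        ((hPv s).intervalIntegrable r s)).symm
    rw [h1]
    exact intervalIntegral.integral_congr fun τ _ => hPcocycle τ s t (v τ)
  have hFd : HasDerivAt F (P t t (v t)) t :=
    ((hPv t).integral_hasStrictDerivAt r t).hasDerivAt
  have hcd : HasDerivAt (fun s : ℝ => (s - r)⁻¹) (-1 / (t - r) ^ 2) t := by
    exact ((hasDerivAt_id' t).sub_const r).inv hc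
  have hgd : HasDerivAt (fun s => (s - r)⁻¹ • F s)
      ((t - r)⁻¹ • P t t (v t) + (-1 / (t - r) ^ 2) • F t) t := hcd.smul hFd
  have hderiv : deriv (fun s => P s t (u s)) t
      = (t - r)⁻¹ • v t + (-1 / (t - r) ^ 2) • F t := by
    rw [hrep, hgd.deriv, hPrefl t]; rfl
  rw [hderiv, hu t]
  show (t - r)⁻¹ • F t = v t - (t - r) • ((t - r)⁻¹ • v t + (-1 / (t - r) ^ 2) • F t)
  rw [smul_add, smul_smul, smul_smul, mul_inv_cancel₀ hc, one_smul]
  have h2 : (t - r) * (-1 / (t - r) ^ 2) = -(t - r)⁻¹ := by field_simp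
  rw [h2, neg_smul]
  abel
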